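/- Fix an integer i ≥ 1 and set α_j(x) = (i+1) binom(i+j+1, j) (1−x)^i x^j. For every x with 1/(i+2) < x < 1, and j_max = ⌊(i+1)x/(1−x)⌋, one has α_{j_max}(x) ≥ ((i+2)x − 1)^{i+1} / ((1−x) · i!) · x^{(i+1)x/(1−x)}. -/
import Mathlib


open Filter Set

/-- `α_j(x) = (i+1) · binom(i+j+1, j) · (1−x)^i · x^j`, the value of the density of
`T̂_i'δ_x` on the interval `[j/(i+j), (j+1)/(i+j+1))`. -/
noncomputable def alphaKant (i j : ℕ) (x : ℝ) : ℝ :=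
  ((i : ℝ) + 1) * (Nat.choose (i + j + 1) j : ℝ) * (1 - x) ^ i * x ^ j

/-- Lower bound for the maximal value of `α_j(x)`: with `j_max = ⌊(i+1)x/(1−x)⌋`,
`α_{j_max}(x) ≥ ((i+2)x − 1)^{i+1} / ((1−x) i!) · x^{(i+1)x/(1−x)}` for `1/(i+2) < x < 1`
(the last power is a real exponent). -/
theorem alphaKant_max_lower_bound (i : ℕ) (hi : 1 ≤ i) (x : ℝ)
    (hx1 : 1/((i:ℝ)+2) < x) (hx2 : x < 1) :
    ((((i:ℝ)+2)*x - 1)^(i+1)) / ((1-x) * (Nat.factorial i : ℝ)) *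
        x ^ ((((i:ℝ)+1)*x)/(1-x))
      ≤ alphaKant i (Nat.floor (((i:ℝ)+1)*x/(1-x))) x := by
  set t : ℝ := ((i:ℝ)+1)*x/(1-x) with ht
  have hx0 : (0:ℝ) < x := lt_trans (by positivity) hx1
  have h1x : (0:ℝ) < 1 - x := by linarith
  have hc : (0:ℝ) < ((i:ℝ)+2)*x - 1 := by
    rw [div_lt_iff₀ (by positivity)] at hx1
    nlinarith
  have ht0 : (0:ℝ) ≤ t := by positivity
  set j := Nat.floor t with hj
  have hjt : (j:ℝ) ≤ t := Nat.floor_le ht0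
  have htj : t < (j:ℝ) + 1 := Nat.lt_floor_add_one t
  -- the real power is bounded by the natural power
  have hA : x ^ t ≤ x ^ (j:ℕ) := by
    rw [← Real.rpow_natCast x j]
    exact Real.rpow_le_rpow_of_exponent_ge hx0 hx2.le hjt
  -- key pointwise bound
  have key : (((i:ℝ)+2)*x - 1) ≤ ((j:ℝ)+1)*(1-x) := by
    have h2 : ((i:ℝ)+1)*x = t*(1-x) := by
      rw [ht]; field_simp
    nlinarith [mul_lt_mul_of_pos_right htj h1x]
  -- natural number inequality
  have hnat : ((j:ℝ)+1)^(i+1) ≤ (Nat.factorial (i+1) : ℝ) * (Nat.choose (i+j+1) j : ℝ) := by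
    have h := Nat.pow_succ_le_ascFactorial (j+1) (i+1)
    rw [Nat.ascFactorial_eq_factorial_mul_choose] at h
    have hsymm : (j + (i+1)).choose (i+1) = (i+j+1).choose j := by
      rw [show j + (i+1) = i+j+1 by ring, show i+1 = (i+j+1) - j by omega]
      exact Nat.choose_symm (by omega)
    rw [hsymm] at h
    calc ((j:ℝ)+1)^(i+1) = (((j+1)^(i+1) : ℕ) : ℝ) := by push_cast; ring
      _ ≤ _ := by exact_mod_cast h
  -- coefficient bound
  have hB : (((i:ℝ)+2)*x - 1)^(i+1) / ((1-x) * (Nat.factorial i : ℝ))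
      ≤ ((i:ℝ)+1) * (Nat.choose (i+j+1) j : ℝ) * (1-x)^i := by
    rw [div_le_iff₀ (by positivity)]
    have hfact : ((i:ℝ)+1) * (Nat.factorial i : ℝ) = (Nat.factorial (i+1) : ℝ) := by
      rw [Nat.factorial_succ]; push_cast; ring
    calc (((i:ℝ)+2)*x - 1)^(i+1) ≤ (((j:ℝ)+1)*(1-x))^(i+1) :=
          pow_le_pow_left₀ hc.le key (i+1)
      _ = ((j:ℝ)+1)^(i+1) * (1-x)^(i+1) := mul_pow _ _ _
      _ ≤ (Nat.factorial (i+1) : ℝ) * (Nat.choose (i+j+1) j : ℝ) * (1-x)^(i+1) := by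
          exact mul_le_mul_of_nonneg_right hnat (by positivity)
      _ = ((i:ℝ)+1) * (Nat.choose (i+j+1) j : ℝ) * (1-x)^i * ((1-x) * (Nat.factorial i : ℝ)) := by
          rw [← hfact]; ring
  -- combine
  unfold alphaKant
  calc (((i:ℝ)+2)*x - 1)^(i+1) / ((1-x) * (Nat.factorial i : ℝ)) * x ^ t
      ≤ (((i:ℝ)+1) * (Nat.choose (i+j+1) j : ℝ) * (1-x)^i) * x ^ (j:ℕ) :=
        mul_le_mul hB hA (Real.rpow_nonneg hx0.le t) (by positivity)
    _ = _ := rfl
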